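/- For all integers k ≥ 2 and n ≥ 1, every k-sum n-free subset S of [n] satisfies |S| ≤ (1 − 1/k)·n + 1 (an inequality between real numbers). -/
import Mathlib


/-- For k ≥ 2 and n ≥ 1, every k-sum n-free subset S of [n] satisfies
|S| ≤ (1 − 1/k)·n + 1. -/
theorem stmt_7 (k n : ℕ) (hk : 2 ≤ k) (hn : 1 ≤ n)
    (S : Finset ℤ) (hS : S ⊆ Finset.Icc (1 : ℤ) (n : ℤ))
    (hfree : ¬ ∃ x : Fin k → ℤ, (∀ i, x i ∈ S) ∧ ∑ i, x i = (n : ℤ)) :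
    (S.card : ℝ) ≤ (1 - 1 / (k : ℝ)) * n + 1 := by
  have hkR : (0:ℝ) < (k:ℝ) := by
    have : 0 < k := by omega
    exact_mod_cast this
  suffices h : (k:ℤ) * S.card ≤ ((k:ℤ) - 1) * n + k by
    have h' : (k:ℝ) * S.card ≤ ((k:ℝ) - 1) * n + k := by exact_mod_cast h
    rw [show (1 - 1/(k:ℝ)) * n + 1 = (((k:ℝ)-1)*n + k)/k by field_simp,
      le_div_iff₀ hkR]
    linarith [h']
  obtain ⟨k', rfl⟩ : ∃ k', k = k' + 2 := ⟨k - 2, by omega⟩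
  set K : ℤ := (k' : ℤ) with hKdef
  have hK0 : 0 ≤ K := Int.natCast_nonneg _
  have cardIcc : ∀ a b : ℤ, a ≤ b + 1 → ((Finset.Icc a b).card : ℤ) = b + 1 - a := by
    intro a b hab
    rw [Int.card_Icc]
    exact Int.toNat_of_nonneg (by linarith)
  rcases S.eq_empty_or_nonempty with rfl | hne
  · simp only [Finset.card_empty, Nat.cast_zero, mul_zero]
    push_cast
    nlinarith [hK0, (by exact_mod_cast hn : (1:ℤ) ≤ (n:ℤ))]
  set m := S.min' hne with hm
  have hmS : m ∈ S := S.min'_mem hne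
  have hmin : ∀ a ∈ S, m ≤ a := fun a ha => S.min'_le a ha
  have hm1 : 1 ≤ m := (Finset.mem_Icc.mp (hS hmS)).1
  have hmn : m ≤ (n:ℤ) := (Finset.mem_Icc.mp (hS hmS)).2
  have hpair : ∀ a ∈ S, ∀ b ∈ S, a + b + K * m ≠ (n:ℤ) := by
    intro a ha b hb heq
    apply hfree
    refine ⟨Fin.cons a (Fin.cons b (fun _ : Fin k' => m)), ?_, ?_⟩
    · intro i
      refine Fin.cases ha (fun j => ?_) i
      exact Fin.cases hb (fun _ => hmS) j
    · rw [Fin.sum_cons, Fin.sum_cons, Finset.sum_const, Finset.card_univ,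
        Fintype.card_fin, nsmul_eq_mul]
      rw [← hKdef] at *
      linarith [heq]
  have hnZ : (1:ℤ) ≤ (n:ℤ) := by exact_mod_cast hn
  by_cases hbig : (n:ℤ) < (K + 2) * m
  · -- large minimum: |S| ≤ n - m + 1 suffices
    have hsub : S ⊆ Finset.Icc m (n:ℤ) := fun a ha =>
      Finset.mem_Icc.mpr ⟨hmin a ha, (Finset.mem_Icc.mp (hS ha)).2⟩
    have hcard : (S.card : ℤ) ≤ (n:ℤ) - m + 1 := by
      have h1 : (S.card : ℤ) ≤ ((Finset.Icc m (n:ℤ)).card : ℤ) := by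
        exact_mod_cast Finset.card_le_card hsub
      rw [cardIcc m n (by linarith)] at h1
      linarith
    push_cast
    nlinarith [mul_le_mul_of_nonneg_left hcard (show (0:ℤ) ≤ K + 2 by linarith), hbig,
      hK0, hm1]
  · push_neg at hbig
    -- small minimum: pairing argument
    set t : ℤ := (n:ℤ) - K * m with ht
    set I : Finset ℤ := Finset.Icc m (t - m) with hI
    have hIcard : (I.card : ℤ) = (n:ℤ) - (K+2)*m + 1 := by
      rw [hI, cardIcc m (t - m) (by rw [ht]; linarith)]
      rw [ht]; ring
    have hmap : ∀ a ∈ S ∩ I, t - a ∈ I \ S := by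
      intro a haI
      rw [Finset.mem_inter] at haI
      obtain ⟨haS, haI2⟩ := haI
      rw [hI, Finset.mem_Icc] at haI2
      refine Finset.mem_sdiff.mpr ⟨?_, ?_⟩
      · rw [hI, Finset.mem_Icc]
        constructor <;> linarith [haI2.1, haI2.2]
      · intro hb
        exact hpair a haS (t - a) hb (by rw [ht]; ring)
    have hinj : Set.InjOn (fun a => t - a) (S ∩ I : Finset ℤ) := by
      intro a _ b _ hab
      simp only at hab
      linarith
    have hc1 : (S ∩ I).card ≤ (I \ S).card :=
      Finset.card_le_card_of_injOn _ hmap hinj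
    have hsplitI : (I \ S).card + (I ∩ S).card = I.card :=
      Finset.card_sdiff_add_card_inter I S
    have hcomm : (I ∩ S).card = (S ∩ I).card := by rw [Finset.inter_comm]
    have hsplitS : (S ∩ I).card + (S \ I).card = S.card := by
      rw [Finset.card_inter_add_card_sdiff]
    have hSd : S \ I ⊆ Finset.Icc (t - m + 1) (n:ℤ) := by
      intro a ha
      rw [Finset.mem_sdiff] at ha
      have h1 := hmin a ha.1
      have h2 := (Finset.mem_Icc.mp (hS ha.1)).2
      rw [Finset.mem_Icc]
      refine ⟨?_, h2⟩
      by_contra hcon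
      push_neg at hcon
      exact ha.2 (by rw [hI, Finset.mem_Icc]; exact ⟨h1, by linarith⟩)
    have hc2 : ((S \ I).card : ℤ) ≤ (K + 1) * m := by
      have h1 : ((S \ I).card : ℤ) ≤ ((Finset.Icc (t - m + 1) (n:ℤ)).card : ℤ) := by
        exact_mod_cast Finset.card_le_card hSd
      rw [cardIcc (t - m + 1) n (by rw [ht]; nlinarith)] at h1
      rw [ht] at h1
      linarith
    have hA : 2 * ((S ∩ I).card : ℤ) ≤ (n:ℤ) - (K+2)*m + 1 := by
      have h1 : ((S ∩ I).card : ℤ) + ((S ∩ I).card : ℤ) ≤ (I.card : ℤ) := by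
        have := hsplitI
        rw [hcomm] at this
        have h2 : ((I \ S).card : ℤ) + ((S ∩ I).card : ℤ) = (I.card : ℤ) := by
          exact_mod_cast this
        have h3 : ((S ∩ I).card : ℤ) ≤ ((I \ S).card : ℤ) := by exact_mod_cast hc1
        linarith
      rw [hIcard] at h1
      linarith
    have hB : ((S ∩ I).card : ℤ) + ((S \ I).card : ℤ) = (S.card : ℤ) := by
      exact_mod_cast hsplitS
    have h2card : 2 * (S.card : ℤ) ≤ (n:ℤ) + K * m + 1 := by linarith
    push_cast
    nlinarith [mul_le_mul_of_nonneg_left h2card (show (0:ℤ) ≤ K + 2 by linarith),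
      mul_le_mul_of_nonneg_left hbig hK0, hnZ, hK0]
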